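/- Let k be a field and n ≥ 1. The map sending σ ∈ S_n to the double coset B P_σ B is a bijection from the symmetric group S_n onto the set of (B,B)-double cosets of GL_n(k); in particular GL_n(k) has exactly n! double cosets with respect to B. -/

import Mathlib

/-- A square matrix is upper triangular if all entries below the diagonal vanish. -/
def IsUpperTriangular {k : Type*} [Field k] {n : ℕ} (A : Matrix (Fin n) (Fin n) k) : Prop :=
  ∀ i j : Fin n, j < i → A i j = 0

/-- The permutation matrix of `σ`, with `(P_σ)_{i,j} = 1` if `i = σ j` and `0` otherwise. -/
def permMat {k : Type*} [Field k] {n : ℕ} (σ : Equiv.Perm (Fin n)) :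
    Matrix (Fin n) (Fin n) k :=
  Matrix.of fun i j => if i = σ j then 1 else 0

/-- The `(B,B)`-double coset `B A B` of a matrix `A`, where `B` is the group of
invertible upper triangular matrices. -/
def doubleCoset {k : Type*} [Field k] {n : ℕ} (A : Matrix (Fin n) (Fin n) k) :
    Set (Matrix (Fin n) (Fin n) k) :=
  {M | ∃ b₁ b₂ : Matrix (Fin n) (Fin n) k, IsUpperTriangular b₁ ∧ IsUpperTriangular b₂ ∧
    IsUnit b₁.det ∧ IsUnit b₂.det ∧ M = b₁ * A * b₂}

namespace BruhatAux

open Matrix hiding IsUpperTriangular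
open Equiv Finset

variable {k : Type*} [Field k] {n : ℕ}

/-! ### Basic facts about upper triangular matrices -/

lemma ut_blockTriangular {A : Matrix (Fin n) (Fin n) k} (h : IsUpperTriangular A) :
    A.BlockTriangular id := fun i j hij => h i j hij

lemma ut_one : IsUpperTriangular (1 : Matrix (Fin n) (Fin n) k) := by
  intro i j hij
  simp [Matrix.one_apply, (ne_of_lt hij).symm]

lemma ut_mul {A B : Matrix (Fin n) (Fin n) k} (hA : IsUpperTriangular A)
    (hB : IsUpperTriangular B) : IsUpperTriangular (A * B) :=
  fun i j hij => (ut_blockTriangular hA).mul (ut_blockTriangular hB) hij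

lemma ut_det_eq {A : Matrix (Fin n) (Fin n) k} (h : IsUpperTriangular A) :
    A.det = ∏ i, A i i :=
  Matrix.det_of_upperTriangular (ut_blockTriangular h)

lemma ut_diag_ne_zero {A : Matrix (Fin n) (Fin n) k} (h : IsUpperTriangular A)
    (hd : IsUnit A.det) (i : Fin n) : A i i ≠ 0 := by
  rw [ut_det_eq h] at hd
  rw [isUnit_iff_ne_zero, Finset.prod_ne_zero_iff] at hd
  exact hd i (Finset.mem_univ i)

lemma ut_inv {A : Matrix (Fin n) (Fin n) k} (h : IsUpperTriangular A) (hd : IsUnit A.det) :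
    IsUpperTriangular A⁻¹ := by
  haveI := A.invertibleOfIsUnitDet hd
  exact fun i j hij => Matrix.blockTriangular_inv_of_blockTriangular (ut_blockTriangular h) hij

lemma det_inv_isUnit {A : Matrix (Fin n) (Fin n) k} (hd : IsUnit A.det) : IsUnit A⁻¹.det := by
  rw [Matrix.det_nonsing_inv]
  simpa [isUnit_iff_ne_zero, Ring.inverse_eq_inv'] using hd

/-! ### Permutation matrices -/

lemma permMat_apply (σ : Perm (Fin n)) (i j : Fin n) :
    (permMat (k := k) σ) i j = if i = σ j then 1 else 0 := rfl

lemma permMat_one : permMat (k := k) (1 : Perm (Fin n)) = 1 := by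
  ext i j
  simp [permMat_apply, Matrix.one_apply]
  split_ifs <;> simp_all

lemma permMat_mul_apply (σ : Perm (Fin n)) (A : Matrix (Fin n) (Fin n) k) (i j : Fin n) :
    (permMat (k := k) σ * A) i j = A (σ⁻¹ i) j := by
  rw [Matrix.mul_apply]
  rw [Finset.sum_eq_single (σ⁻¹ i)]
  · simp [permMat_apply]
  · intro b _ hb
    have : i ≠ σ b := fun h => hb (by simp [h])
    simp [permMat_apply, this]
  · simp

lemma mul_permMat_apply (σ : Perm (Fin n)) (A : Matrix (Fin n) (Fin n) k) (i j : Fin n) :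
    (A * permMat (k := k) σ) i j = A i (σ j) := by
  rw [Matrix.mul_apply]
  rw [Finset.sum_eq_single (σ j)]
  · simp [permMat_apply]
  · intro b _ hb
    simp [permMat_apply, hb]
  · simp

lemma permMat_mul (σ τ : Perm (Fin n)) :
    permMat (k := k) (σ * τ) = permMat σ * permMat τ := by
  ext i j
  rw [permMat_mul_apply]
  simp only [permMat_apply, Perm.mul_apply]
  refine if_congr ?_ rfl rfl
  exact ⟨fun h => by simp [h], fun h => by simp [← h]⟩

lemma permMat_eq_permMatrix (σ : Perm (Fin n)) :
    permMat (k := k) σ = (σ⁻¹).permMatrix k := by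
  ext i j
  simp only [permMat_apply, Equiv.Perm.permMatrix, PEquiv.toMatrix, Equiv.toPEquiv_apply,
    Option.mem_def, Option.some.injEq, Matrix.of_apply]
  congr 1
  simp only [eq_iff_iff]
  constructor
  · rintro rfl; simp
  · rintro rfl; simp

lemma det_permMat_isUnit (σ : Perm (Fin n)) : IsUnit (permMat (k := k) σ).det := by
  rw [permMat_eq_permMatrix, Matrix.det_permutation]
  exact (Equiv.Perm.sign (σ⁻¹)).isUnit.map (Int.castRingHom k)

lemma permMat_swap_mul_self (a b : Fin n) :
    permMat (k := k) (Equiv.swap a b) * permMat (Equiv.swap a b) = 1 := by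
  rw [← permMat_mul, Equiv.swap_mul_self, permMat_one]

lemma transvection_mul_permMat (σ : Perm (Fin n)) (p q : Fin n) (c : k) :
    Matrix.transvection p q c * permMat σ =
      permMat σ * Matrix.transvection (σ⁻¹ p) (σ⁻¹ q) c := by
  ext a b
  rw [mul_permMat_apply, permMat_mul_apply]
  simp only [Matrix.transvection, Matrix.add_apply, Matrix.one_apply, Matrix.single,
    Matrix.of_apply]
  have h1 : (a = σ b) ↔ (σ⁻¹ a = b) := ⟨fun h => by simp [h], fun h => by simp [← h]⟩
  have h2 : (p = a ∧ q = σ b) ↔ (σ⁻¹ p = σ⁻¹ a ∧ σ⁻¹ q = b) := by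
    constructor
    · rintro ⟨rfl, h⟩
      exact ⟨rfl, by simp [h]⟩
    · rintro ⟨hh, rfl⟩
      exact ⟨σ⁻¹.injective hh, by simp⟩
  rw [if_congr h1 rfl rfl, if_congr h2 rfl rfl]

lemma ut_transvection {p q : Fin n} (h : p < q) (c : k) :
    IsUpperTriangular (Matrix.transvection p q c) := by
  intro a b hab
  simp only [Matrix.transvection, Matrix.add_apply, Matrix.one_apply, Matrix.single,
    Matrix.of_apply]
  rw [if_neg (ne_of_gt hab), if_neg]
  · simp
  · rintro ⟨rfl, rfl⟩
    exact absurd h (not_lt.mpr hab.le)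

/-! ### Double cosets -/

lemma self_mem_doubleCoset (A : Matrix (Fin n) (Fin n) k) : A ∈ doubleCoset A :=
  ⟨1, 1, ut_one, ut_one, by simp, by simp, by simp⟩

lemma mul_mem_doubleCoset {A M b c : Matrix (Fin n) (Fin n) k}
    (hb : IsUpperTriangular b) (hbd : IsUnit b.det)
    (hc : IsUpperTriangular c) (hcd : IsUnit c.det)
    (hM : M ∈ doubleCoset A) : b * M * c ∈ doubleCoset A := by
  obtain ⟨b₁, b₂, h₁, h₂, hd₁, hd₂, rfl⟩ := hM
  exact ⟨b * b₁, b₂ * c, ut_mul hb h₁, ut_mul h₂ hc, by rw [Matrix.det_mul]; exact hbd.mul hd₁,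
    by rw [Matrix.det_mul]; exact hd₂.mul hcd, by noncomm_ring⟩

lemma doubleCoset_eq_of_mem {A M : Matrix (Fin n) (Fin n) k} (hM : M ∈ doubleCoset A) :
    doubleCoset M = doubleCoset A := by
  obtain ⟨b₁, b₂, h₁, h₂, hd₁, hd₂, rfl⟩ := hM
  ext X
  constructor
  · rintro ⟨c₁, c₂, g₁, g₂, gd₁, gd₂, rfl⟩
    exact ⟨c₁ * b₁, b₂ * c₂, ut_mul g₁ h₁, ut_mul h₂ g₂, by rw [Matrix.det_mul]; exact gd₁.mul hd₁,
      by rw [Matrix.det_mul]; exact hd₂.mul gd₂, by noncomm_ring⟩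
  · rintro ⟨c₁, c₂, g₁, g₂, gd₁, gd₂, rfl⟩
    refine ⟨c₁ * b₁⁻¹, b₂⁻¹ * c₂, ut_mul g₁ (ut_inv h₁ hd₁), ut_mul (ut_inv h₂ hd₂) g₂,
      by rw [Matrix.det_mul]; exact gd₁.mul (det_inv_isUnit hd₁), by rw [Matrix.det_mul]; exact (det_inv_isUnit hd₂).mul gd₂, ?_⟩
    haveI := Matrix.invertibleOfIsUnitDet _ hd₁
    haveI := Matrix.invertibleOfIsUnitDet _ hd₂
    calc c₁ * A * c₂ = c₁ * ((b₁⁻¹ * b₁) * A * (b₂ * b₂⁻¹)) * c₂ := by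
          rw [Matrix.nonsing_inv_mul _ hd₁, Matrix.mul_nonsing_inv _ hd₂]; noncomm_ring
      _ = c₁ * b₁⁻¹ * (b₁ * A * b₂) * (b₂⁻¹ * c₂) := by noncomm_ring

/-! ### Adjacent transpositions -/

lemma adj_lt {i i' : Fin n} (hii' : (i' : ℕ) = (i : ℕ) + 1) : i < i' := by
  rw [Fin.lt_def]; omega

lemma adj_ne {i i' : Fin n} (hii' : (i' : ℕ) = (i : ℕ) + 1) : i ≠ i' := by
  intro h; rw [h] at hii'; omega

lemma swap_adj_lt {i i' : Fin n} (hii' : (i' : ℕ) = (i : ℕ) + 1) {p q : Fin n} (hpq : q < p)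
    (hne : ¬(p = i' ∧ q = i)) : Equiv.swap i i' q < Equiv.swap i i' p := by
  simp only [Equiv.swap_apply_def]
  rw [Fin.lt_def] at hpq ⊢
  rw [not_and_or] at hne
  split_ifs <;> simp_all [Fin.ext_iff] <;> omega

lemma conj_entry (σ : Perm (Fin n)) (hσ : σ⁻¹ = σ) (M : Matrix (Fin n) (Fin n) k) (p q : Fin n) :
    (permMat (k := k) σ * M * permMat (k := k) σ) p q = M (σ p) (σ q) := by
  rw [mul_permMat_apply, permMat_mul_apply, hσ]

lemma conj_ut {i i' : Fin n} (hii' : (i' : ℕ) = (i : ℕ) + 1) {M : Matrix (Fin n) (Fin n) k}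
    (hM : IsUpperTriangular M) (h0 : M i i' = 0) :
    IsUpperTriangular (permMat (Equiv.swap i i') * M * permMat (Equiv.swap i i')) := by
  intro p q hpq
  rw [conj_entry _ (Equiv.swap_inv i i') M p q]
  by_cases hc : p = i' ∧ q = i
  · rw [hc.1, hc.2, Equiv.swap_apply_right, Equiv.swap_apply_left]
    exact h0
  · exact hM _ _ (swap_adj_lt hii' hpq hc)

lemma exists_split {i i' : Fin n} (hii' : (i' : ℕ) = (i : ℕ) + 1)
    {β : Matrix (Fin n) (Fin n) k} (hβ : IsUpperTriangular β) (hd : IsUnit β.det) :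
    ∃ (β' : Matrix (Fin n) (Fin n) k) (c : k), IsUpperTriangular β' ∧ IsUnit β'.det ∧
      β' i i' = 0 ∧ β = β' * Matrix.transvection i i' c := by
  refine ⟨β * Matrix.transvection i i' (-(β i i' / β i i)), β i i' / β i i, ?_, ?_, ?_, ?_⟩
  · exact ut_mul hβ (ut_transvection (adj_lt hii') _)
  · rw [Matrix.det_mul, Matrix.det_transvection_of_ne _ _ (adj_ne hii'), mul_one]
    exact hd
  · rw [Matrix.mul_transvection_apply_same]
    field_simp [ut_diag_ne_zero hβ hd i]
    ring
  · rw [mul_assoc, Matrix.transvection_mul_transvection_same _ _ (adj_ne hii'),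
      neg_add_cancel, Matrix.transvection_zero, mul_one]

lemma case1 {i i' : Fin n} (hii' : (i' : ℕ) = (i : ℕ) + 1) {v : Perm (Fin n)}
    (hv : v⁻¹ i < v⁻¹ i') {β : Matrix (Fin n) (Fin n) k}
    (hβ : IsUpperTriangular β) (hd : IsUnit β.det) :
    permMat (k := k) (Equiv.swap i i') * β * permMat v ∈
      doubleCoset (permMat (Equiv.swap i i' * v)) := by
  obtain ⟨β', c, hβ', hd', h0, hsplit⟩ := exists_split hii' hβ hd
  set t := Equiv.swap i i' with ht
  have hss : permMat (k := k) t * permMat t = 1 := permMat_swap_mul_self i i'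
  have htv := transvection_mul_permMat (k := k) v i i' c
  refine ⟨permMat t * β' * permMat t, Matrix.transvection (v⁻¹ i) (v⁻¹ i') c,
    conj_ut hii' hβ' h0, ut_transvection hv _, ?_, ?_, ?_⟩
  · rw [Matrix.det_mul, Matrix.det_mul]
    exact ((det_permMat_isUnit t).mul hd').mul (det_permMat_isUnit t)
  · rw [Matrix.det_transvection_of_ne _ _ (ne_of_lt hv)]
    exact isUnit_one
  · rw [hsplit, permMat_mul]
    calc permMat t * (β' * Matrix.transvection i i' c) * permMat v
        = permMat t * β' * (Matrix.transvection i i' c * permMat v) := by noncomm_ring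
      _ = permMat t * β' * (permMat v * Matrix.transvection (v⁻¹ i) (v⁻¹ i') c) := by rw [htv]
      _ = permMat t * β' * ((permMat t * permMat t) * permMat v) *
            Matrix.transvection (v⁻¹ i) (v⁻¹ i') c := by rw [hss]; noncomm_ring
      _ = permMat t * β' * permMat t * (permMat t * permMat v) *
            Matrix.transvection (v⁻¹ i) (v⁻¹ i') c := by noncomm_ring

lemma para_factor {i i' : Fin n} (hii' : (i' : ℕ) = (i : ℕ) + 1)
    {g : Matrix (Fin n) (Fin n) k}
    (hg : ∀ p q : Fin n, q < p → ¬(p = i' ∧ q = i) → g p q = 0)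
    (hdet : IsUnit g.det) (hx : g i' i ≠ 0) :
    ∃ β₁ β₂ : Matrix (Fin n) (Fin n) k, IsUpperTriangular β₁ ∧ IsUpperTriangular β₂ ∧
      IsUnit β₁.det ∧ IsUnit β₂.det ∧ g = β₁ * permMat (Equiv.swap i i') * β₂ := by
  set c : Fin n → k := fun p => if p < i' then -(g p i / g i' i) else 0 with hc
  set E : Matrix (Fin n) (Fin n) k :=
    1 + Matrix.of (fun p q => if q = i' then c p else 0) with hE
  have hEg : ∀ p q, (E * g) p q = g p q + c p * g i' q := by
    intro p q
    rw [hE, Matrix.add_mul, Matrix.one_mul, Matrix.add_apply, Matrix.mul_apply]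
    congr 1
    rw [Finset.sum_eq_single i']
    · simp
    · intro b _ hb
      simp [hb]
    · simp
  have hEut : IsUpperTriangular E := by
    intro p q hpq
    rw [hE, Matrix.add_apply, Matrix.one_apply, if_neg (ne_of_gt hpq), Matrix.of_apply]
    rcases eq_or_ne q i' with rfl | hq
    · rw [if_pos rfl, hc]
      simp only
      rw [if_neg (not_lt.mpr hpq.le)]
      simp
    · simp [hq]
  have hEdiag : ∀ p, E p p = 1 := by
    intro p
    rw [hE, Matrix.add_apply, Matrix.one_apply_eq, Matrix.of_apply]
    rcases eq_or_ne p i' with rfl | hq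
    · rw [if_pos rfl, hc]
      simp
    · simp [hq]
  have hEdet : IsUnit E.det := by
    rw [ut_det_eq hEut]
    simp [hEdiag]
  set t := Equiv.swap i i' with hts
  have hβ₂ut : IsUpperTriangular (permMat (k := k) t * (E * g)) := by
    intro p q hpq
    rw [permMat_mul_apply, Equiv.swap_inv, hEg]
    have hine := adj_ne hii'
    rcases eq_or_ne p i with hpi | hpi
    · rw [hpi, Equiv.swap_apply_left]
      have hci' : c i' = 0 := by rw [hc]; simp
      rw [hci', zero_mul, add_zero]
      have hqi' : q < i := hpi ▸ hpq
      refine hg i' q (lt_trans hqi' (adj_lt hii')) ?_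
      rintro ⟨-, rfl⟩
      exact absurd hqi' (lt_irrefl _)
    rcases eq_or_ne p i' with hpi' | hpi'
    · rw [hpi', Equiv.swap_apply_right]
      have hci : c i = -(g i i / g i' i) := by rw [hc]; simp [adj_lt hii']
      rcases eq_or_ne q i with hqi | hqi
      · rw [hqi, hci]
        field_simp
        ring
      · have hq_lt_i : q < i := by
          have hqlt : q < i' := hpi' ▸ hpq
          rw [Fin.lt_def] at hqlt ⊢
          have := Fin.val_ne_of_ne hqi
          omega
        have h1 : g i q = 0 := hg i q hq_lt_i (fun hh => hine (hh.1.symm ▸ rfl))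
        have h2 : g i' q = 0 := hg i' q (lt_trans hq_lt_i (adj_lt hii'))
          (fun hh => absurd (hh.2 ▸ hq_lt_i) (lt_irrefl _))
        rw [h1, h2, mul_zero, add_zero]
    · rw [Equiv.swap_apply_of_ne_of_ne hpi hpi']
      have h1 : g p q = 0 := hg p q hpq (by rintro ⟨rfl, -⟩; exact hpi' rfl)
      rcases lt_or_ge p i' with hplt | hple
      · have hp_lt_i : p < i := by
          rw [Fin.lt_def] at hplt ⊢
          have := Fin.val_ne_of_ne hpi
          omega
        have h2 : g i' q = 0 := hg i' q (lt_trans (lt_trans hpq hp_lt_i) (adj_lt hii'))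
          (by rintro ⟨-, rfl⟩; exact absurd (lt_trans hpq hp_lt_i) (lt_irrefl _))
        rw [h1, h2, mul_zero, add_zero]
      · have hcp : c p = 0 := by rw [hc]; simp [not_lt.mpr hple]
        rw [h1, hcp, zero_mul, add_zero]
  have hss : permMat (k := k) t * permMat t = 1 := permMat_swap_mul_self i i'
  have hEinv : E⁻¹ * E = 1 := Matrix.nonsing_inv_mul E hEdet
  refine ⟨E⁻¹, permMat t * (E * g), ut_inv hEut hEdet, hβ₂ut, det_inv_isUnit hEdet, ?_, ?_⟩
  · rw [Matrix.det_mul, Matrix.det_mul]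
    exact (det_permMat_isUnit t).mul (hEdet.mul hdet)
  · calc g = (E⁻¹ * E) * g := by rw [hEinv, one_mul]
      _ = E⁻¹ * (permMat t * permMat t) * (E * g) := by rw [hss]; noncomm_ring
      _ = E⁻¹ * permMat t * (permMat t * (E * g)) := by noncomm_ring

lemma key_step {i i' : Fin n} (hii' : (i' : ℕ) = (i : ℕ) + 1) (v : Perm (Fin n))
    {β : Matrix (Fin n) (Fin n) k} (hβ : IsUpperTriangular β) (hd : IsUnit β.det) :
    permMat (k := k) (Equiv.swap i i') * β * permMat v ∈
      doubleCoset (permMat (Equiv.swap i i' * v)) ∪ doubleCoset (permMat v) := by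
  set t := Equiv.swap i i' with hts
  by_cases hv : v⁻¹ i < v⁻¹ i'
  · exact Or.inl (case1 hii' hv hβ hd)
  · have hne : v⁻¹ i' ≠ v⁻¹ i := fun h => adj_ne hii' (v⁻¹.injective h).symm
    have hv' : v⁻¹ i' < v⁻¹ i := lt_of_le_of_ne (not_lt.mp hv) hne
    set g := permMat (k := k) t * β * permMat t with hgdef
    have hgent : ∀ p q, g p q = β (t p) (t q) := fun p q =>
      conj_entry t (Equiv.swap_inv i i') β p q
    have hg : ∀ p q : Fin n, q < p → ¬(p = i' ∧ q = i) → g p q = 0 := by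
      intro p q hpq hne2
      rw [hgent]
      exact hβ _ _ (swap_adj_lt hii' hpq hne2)
    have hgd : IsUnit g.det := by
      rw [hgdef, Matrix.det_mul, Matrix.det_mul]
      exact ((det_permMat_isUnit t).mul hd).mul (det_permMat_isUnit t)
    have hss : permMat (k := k) t * permMat t = 1 := permMat_swap_mul_self i i'
    have hrw : permMat (k := k) t * β * permMat v = g * permMat (t * v) := by
      rw [permMat_mul, hgdef]
      calc permMat (k := k) t * β * permMat v
          = permMat t * β * ((permMat t * permMat t) * permMat v) := by rw [hss]; noncomm_ring
        _ = permMat t * β * permMat t * (permMat t * permMat v) := by noncomm_ring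
    by_cases hx : g i' i = 0
    · left
      have hgu : IsUpperTriangular g := by
        intro p q hpq
        by_cases hcc : p = i' ∧ q = i
        · rw [hcc.1, hcc.2]
          exact hx
        · exact hg p q hpq hcc
      rw [hrw]
      exact ⟨g, 1, hgu, ut_one, hgd, by simp, by rw [mul_one]⟩
    · right
      obtain ⟨β₁, β₂, h1, h2, hd1, hd2, hfac⟩ := para_factor hii' hg hgd hx
      have hvv : (t * v)⁻¹ i < (t * v)⁻¹ i' := by
        have e1 : (t * v)⁻¹ i = v⁻¹ i' := by
          rw [_root_.mul_inv_rev, Equiv.Perm.mul_apply, hts, Equiv.swap_inv, Equiv.swap_apply_left]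
        have e2 : (t * v)⁻¹ i' = v⁻¹ i := by
          rw [_root_.mul_inv_rev, Equiv.Perm.mul_apply, hts, Equiv.swap_inv, Equiv.swap_apply_right]
        rw [e1, e2]
        exact hv'
      have hc1 : permMat (k := k) t * β₂ * permMat (t * v) ∈
          doubleCoset (permMat (t * (t * v))) := case1 hii' hvv h2 hd2
      have htv : t * (t * v) = v := by
        rw [← mul_assoc, hts, Equiv.swap_mul_self, one_mul]
      rw [htv] at hc1
      rw [hrw, hfac]
      have hassoc : β₁ * permMat (k := k) t * β₂ * permMat (t * v) =
          β₁ * (permMat t * β₂ * permMat (t * v)) * 1 := by noncomm_ring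
      rw [hassoc]
      exact mul_mem_doubleCoset h1 hd1 ut_one (by simp) hc1

/-! ### Injectivity -/

lemma perm_eq_of_mem {σ τ : Perm (Fin n)} (h : permMat (k := k) τ ∈ doubleCoset (permMat σ)) :
    σ = τ := by
  obtain ⟨b₁, b₂, h₁, h₂, hd₁, hd₂, heq⟩ := h
  have hb₂ : b₂ * b₂⁻¹ = 1 := Matrix.mul_nonsing_inv b₂ hd₂
  have heq2 : permMat (k := k) τ * b₂⁻¹ = b₁ * permMat σ := by
    calc permMat (k := k) τ * b₂⁻¹ = b₁ * permMat σ * (b₂ * b₂⁻¹) := by rw [heq]; noncomm_ring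
      _ = b₁ * permMat σ := by rw [hb₂, mul_one]
  have hptle : ∀ j : Fin n, (τ j : ℕ) ≤ (σ j : ℕ) := by
    intro j
    have e1 : (permMat (k := k) τ * b₂⁻¹) (τ j) j = b₂⁻¹ j j := by
      rw [permMat_mul_apply]
      congr 1
      simp
    have e2 : (b₁ * permMat (k := k) σ) (τ j) j = b₁ (τ j) (σ j) := mul_permMat_apply σ b₁ (τ j) j
    have hne0 : b₁ (τ j) (σ j) ≠ 0 := by
      rw [← e2, ← heq2, e1]
      exact ut_diag_ne_zero (ut_inv h₂ hd₂) (det_inv_isUnit hd₂) j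
    by_contra hlt
    push_neg at hlt
    exact hne0 (h₁ _ _ (by rw [Fin.lt_def]; omega))
  have hsum : ∑ j, ((τ j : ℕ)) = ∑ j, ((σ j : ℕ)) := by
    rw [Equiv.sum_comp τ (fun x : Fin n => (x : ℕ)), Equiv.sum_comp σ (fun x : Fin n => (x : ℕ))]
  have hall := (Finset.sum_eq_sum_iff_of_le (fun j _ => hptle j)).mp hsum
  exact Equiv.ext fun j => (Fin.ext (hall j (Finset.mem_univ j))).symm

/-! ### Surjectivity via generation -/

def InB (M : Matrix (Fin n) (Fin n) k) : Prop :=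
  ∃ σ : Perm (Fin n), M ∈ doubleCoset (permMat σ)

lemma inB_one : InB (1 : Matrix (Fin n) (Fin n) k) :=
  ⟨1, by rw [permMat_one]; exact self_mem_doubleCoset 1⟩

lemma inB_ut_mul {b M : Matrix (Fin n) (Fin n) k} (hb : IsUpperTriangular b)
    (hbd : IsUnit b.det) (h : InB M) : InB (b * M) := by
  obtain ⟨σ, hσ⟩ := h
  refine ⟨σ, ?_⟩
  have := mul_mem_doubleCoset hb hbd ut_one (by simp) hσ
  rwa [mul_one] at this

lemma inB_swap_mul {i i' : Fin n} (hii' : (i' : ℕ) = (i : ℕ) + 1)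
    {M : Matrix (Fin n) (Fin n) k} (h : InB M) :
    InB (permMat (k := k) (Equiv.swap i i') * M) := by
  obtain ⟨σ, b₁, b₂, h₁, h₂, hd₁, hd₂, rfl⟩ := h
  have hmm : permMat (k := k) (Equiv.swap i i') * (b₁ * permMat σ * b₂) =
      (permMat (Equiv.swap i i') * b₁ * permMat σ) * b₂ := by noncomm_ring
  rw [hmm]
  rcases key_step hii' σ h₁ hd₁ with hmem | hmem
  · refine ⟨Equiv.swap i i' * σ, ?_⟩
    have := mul_mem_doubleCoset ut_one (by simp) h₂ hd₂ hmem
    rwa [one_mul] at this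
  · refine ⟨σ, ?_⟩
    have := mul_mem_doubleCoset ut_one (by simp) h₂ hd₂ hmem
    rwa [one_mul] at this

lemma inB_perm_mul {m : ℕ} (σ : Perm (Fin m)) {M : Matrix (Fin m) (Fin m) k} (h : InB M) :
    InB (permMat (k := k) σ * M) := by
  cases m with
  | zero =>
      have hσ1 : σ = 1 := Subsingleton.elim _ _
      rw [hσ1, permMat_one, one_mul]
      exact h
  | succ m =>
      have main : ∀ τ ∈ Submonoid.closure
          (Set.range fun p : Fin m => Equiv.swap p.castSucc p.succ),
          ∀ N : Matrix (Fin (m+1)) (Fin (m+1)) k, InB N → InB (permMat (k := k) τ * N) := by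
        intro τ hτ
        induction hτ using Submonoid.closure_induction with
        | mem x hx =>
            obtain ⟨p, rfl⟩ := hx
            intro N hN
            exact inB_swap_mul (by simp) hN
        | one =>
            intro N hN
            rwa [permMat_one, one_mul]
        | mul x y hx hy ihx ihy =>
            intro N hN
            rw [permMat_mul, mul_assoc]
            exact ihx _ (ihy _ hN)
      exact main σ (by rw [Equiv.Perm.mclosure_swap_castSucc_succ]; trivial) M h

lemma inB_transvection_mul (t : Matrix.TransvectionStruct (Fin n) k)
    {M : Matrix (Fin n) (Fin n) k} (h : InB M) : InB (t.toMatrix * M) := by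
  obtain ⟨p, q, hpq, c⟩ := t
  rw [Matrix.TransvectionStruct.toMatrix_mk]
  rcases lt_or_gt_of_ne hpq with hlt | hgt
  · exact inB_ut_mul (ut_transvection hlt c)
      (by rw [Matrix.det_transvection_of_ne _ _ hpq]; exact isUnit_one) h
  · set w := Equiv.swap p q with hw
    have hww : permMat (k := k) w * permMat w = 1 := permMat_swap_mul_self p q
    have hconj := transvection_mul_permMat (k := k) w p q c
    have hw1 : w⁻¹ p = q := by rw [hw, Equiv.swap_inv, Equiv.swap_apply_left]
    have hw2 : w⁻¹ q = p := by rw [hw, Equiv.swap_inv, Equiv.swap_apply_right]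
    rw [hw1, hw2] at hconj
    have heq : Matrix.transvection p q c * M =
        permMat (k := k) w * (Matrix.transvection q p c * (permMat w * M)) := by
      calc Matrix.transvection p q c * M
          = Matrix.transvection p q c * ((permMat w * permMat w) * M) := by rw [hww, one_mul]
        _ = (Matrix.transvection p q c * permMat w) * (permMat w * M) := by noncomm_ring
        _ = (permMat w * Matrix.transvection q p c) * (permMat w * M) := by rw [hconj]
        _ = permMat (k := k) w * (Matrix.transvection q p c * (permMat w * M)) := by
            noncomm_ring
    rw [heq]
    refine inB_perm_mul w (inB_ut_mul (ut_transvection hgt c) ?_ (inB_perm_mul w h))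
    rw [Matrix.det_transvection_of_ne q p (ne_of_lt hgt)]
    exact isUnit_one

lemma inB_of_det_isUnit {A : Matrix (Fin n) (Fin n) k} (hA : IsUnit A.det) : InB A := by
  have H : ∀ M : Matrix (Fin n) (Fin n) k, M.det ≠ 0 →
      ∀ N : Matrix (Fin n) (Fin n) k, InB N → InB (M * N) := by
    intro M hM
    apply Matrix.diagonal_transvection_induction_of_det_ne_zero _ M hM
    · intro D hD N hN
      refine inB_ut_mul ?_ (isUnit_iff_ne_zero.mpr hD) hN
      intro a b hab
      exact Matrix.diagonal_apply_ne D (ne_of_gt hab)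
    · intro t N hN
      exact inB_transvection_mul t hN
    · intro P Q hP hQ ihP ihQ N hN
      rw [mul_assoc]
      exact ihP _ (ihQ _ hN)
  have := H A (by simpa [isUnit_iff_ne_zero] using hA) 1 inB_one
  rwa [mul_one] at this

end BruhatAux

theorem bruhat_double_cosets_bijection {k : Type*} [Field k] {n : ℕ} (hn : 1 ≤ n) :
    Set.BijOn (fun σ : Equiv.Perm (Fin n) => doubleCoset (permMat (k := k) σ)) Set.univ
      {S : Set (Matrix (Fin n) (Fin n) k) |
        ∃ A : Matrix (Fin n) (Fin n) k, IsUnit A.det ∧ S = doubleCoset A} ∧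
    Nat.card {S : Set (Matrix (Fin n) (Fin n) k) |
        ∃ A : Matrix (Fin n) (Fin n) k, IsUnit A.det ∧ S = doubleCoset A} = Nat.factorial n := by
  classical
  open BruhatAux in
  have hmaps : Set.MapsTo (fun σ : Equiv.Perm (Fin n) => doubleCoset (permMat (k := k) σ))
      Set.univ {S : Set (Matrix (Fin n) (Fin n) k) |
        ∃ A : Matrix (Fin n) (Fin n) k, IsUnit A.det ∧ S = doubleCoset A} :=
    fun σ _ => ⟨permMat σ, det_permMat_isUnit σ, rfl⟩
  have hinj : Set.InjOn (fun σ : Equiv.Perm (Fin n) => doubleCoset (permMat (k := k) σ))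
      Set.univ := by
    intro σ _ τ _ h
    have hmem : permMat (k := k) τ ∈ doubleCoset (permMat σ) := by
      rw [show doubleCoset (permMat (k := k) σ) = doubleCoset (permMat τ) from h]
      exact self_mem_doubleCoset _
    exact perm_eq_of_mem hmem
  have hsurj : Set.SurjOn (fun σ : Equiv.Perm (Fin n) => doubleCoset (permMat (k := k) σ))
      Set.univ {S : Set (Matrix (Fin n) (Fin n) k) |
        ∃ A : Matrix (Fin n) (Fin n) k, IsUnit A.det ∧ S = doubleCoset A} := by
    rintro S ⟨A, hA, rfl⟩
    obtain ⟨σ, hσ⟩ := inB_of_det_isUnit hA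
    exact ⟨σ, Set.mem_univ σ, (doubleCoset_eq_of_mem hσ).symm⟩
  have hbij := And.intro hmaps (And.intro hinj hsurj)
  refine ⟨hbij, ?_⟩
  have e := Set.BijOn.equiv _ hbij
  rw [← Nat.card_congr e, Nat.card_congr (Equiv.Set.univ _), Nat.card_eq_fintype_card,
    Fintype.card_perm, Fintype.card_fin]
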